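/- (First property of Proposition 2.) Every optimal solution (ℓ, d) of problem (P1.1) has nondecreasing local-computing allocation: ℓ_1 ≤ ℓ_2 ≤ … ≤ ℓ_N. -/

import Mathlib

open Finset

/-- Local-computing energy: `E_loc(x) = ζ C³ x³ / τ²`. -/
noncomputable def Eloc (ζ C τ x : ℝ) : ℝ := ζ * C ^ 3 * x ^ 3 / τ ^ 2

/-- Offloading energy at a slot with channel gain `g`: `E_off(x) = (τσ²/g)(2^{x/(τB)} − 1)`. -/
noncomputable def Eoff (τ σ2 g B x : ℝ) : ℝ := τ * σ2 / g * ((2 : ℝ) ^ (x / (τ * B)) - 1)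

/-- Feasibility for problem (P1.1): nonnegativity, task causality, task completion. -/
def FeasP11 (N : ℕ) (A ℓ d : ℕ → ℝ) : Prop :=
  (∀ i ∈ Finset.Icc 1 N, 0 ≤ ℓ i ∧ 0 ≤ d i) ∧
  (∀ i ∈ Finset.Icc 1 (N - 1),
    ∑ j ∈ Finset.Icc 1 i, (ℓ j + d j) ≤ ∑ j ∈ Finset.Icc 1 i, A j) ∧
  ∑ j ∈ Finset.Icc 1 N, (ℓ j + d j) = ∑ j ∈ Finset.Icc 1 N, A j

/-- Sums of two functions differing only at two points. -/
lemma sum_diff_pair {s : Finset ℕ} {i j : ℕ} (hi : i ∈ s) (hj : j ∈ s) (hij : i ≠ j)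
    (F G : ℕ → ℝ) (h : ∀ k ∈ s, k ≠ i → k ≠ j → F k = G k) :
    ∑ k ∈ s, F k = ∑ k ∈ s, G k + ((F i - G i) + (F j - G j)) := by
  have hsub : ∑ k ∈ s, (F k - G k) = ∑ k ∈ ({i, j} : Finset ℕ), (F k - G k) := by
    refine (Finset.sum_subset ?_ ?_).symm
    · intro k hk
      simp only [Finset.mem_insert, Finset.mem_singleton] at hk
      rcases hk with rfl | rfl <;> assumption
    · intro k hk hk'
      simp only [Finset.mem_insert, Finset.mem_singleton, not_or] at hk'
      rw [h k hk hk'.1 hk'.2]; ring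
  have hpair : ∑ k ∈ ({i, j} : Finset ℕ), (F k - G k) = (F i - G i) + (F j - G j) :=
    Finset.sum_pair hij
  have hd : ∑ k ∈ s, (F k - G k) = ∑ k ∈ s, F k - ∑ k ∈ s, G k := Finset.sum_sub_distrib F G
  linarith [hsub, hpair, hd]

/-- Sums of two functions differing only at one point. -/
lemma sum_diff_single {s : Finset ℕ} {i : ℕ} (hi : i ∈ s)
    (F G : ℕ → ℝ) (h : ∀ k ∈ s, k ≠ i → F k = G k) :
    ∑ k ∈ s, F k = ∑ k ∈ s, G k + (F i - G i) := by
  have hsub : ∑ k ∈ s, (F k - G k) = ∑ k ∈ ({i} : Finset ℕ), (F k - G k) := by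
    refine (Finset.sum_subset ?_ ?_).symm
    · intro k hk
      simp only [Finset.mem_singleton] at hk; rwa [hk]
    · intro k hk hk'
      simp only [Finset.mem_singleton] at hk'
      rw [h k hk hk']; ring
  have hd : ∑ k ∈ s, (F k - G k) = ∑ k ∈ s, F k - ∑ k ∈ s, G k := Finset.sum_sub_distrib F G
  simp only [Finset.sum_singleton] at hsub
  linarith [hsub, hd]

set_option maxHeartbeats 1000000 in
/-- First property of Proposition 2: every optimal solution of (P1.1) has
nondecreasing local-computing allocation. -/
theorem stmt_16
    (N : ℕ) (hN : 0 < N)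
    (τ η ζ C σ2 B : ℝ)
    (hτ : 0 < τ) (hη : 0 < η) (hζ : 0 < ζ) (hC : 0 < C) (hσ2 : 0 < σ2) (hB : 0 < B)
    (h g : ℕ → ℝ)
    (hhpos : ∀ i ∈ Finset.Icc 1 N, 0 < h i) (hgpos : ∀ i ∈ Finset.Icc 1 N, 0 < g i)
    (h' : ℕ → ℝ)
    (hh' : ∀ i ∈ Finset.Icc 1 N,
      (∃ j ∈ Finset.Icc 1 i, h' i = h j) ∧ ∀ j ∈ Finset.Icc 1 i, h j ≤ h' i)
    (A : ℕ → ℝ) (hA : ∀ i ∈ Finset.Icc 1 N, 0 ≤ A i)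
    (ℓ d : ℕ → ℝ)
    (hfeas : FeasP11 N A ℓ d)
    (hopt : ∀ ℓ' d' : ℕ → ℝ, FeasP11 N A ℓ' d' →
      ∑ i ∈ Finset.Icc 1 N, 1 / (η * h' i) * (Eloc ζ C τ (ℓ i) + Eoff τ σ2 (g i) B (d i))
        ≤ ∑ i ∈ Finset.Icc 1 N, 1 / (η * h' i) * (Eloc ζ C τ (ℓ' i) + Eoff τ σ2 (g i) B (d' i))) :
    ∀ i ∈ Finset.Icc 1 (N - 1), ℓ i ≤ ℓ (i + 1) := by
  intro i hi
  simp only [Finset.mem_Icc] at hi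
  have hi1 : 1 ≤ i := hi.1
  have hiN : i + 1 ≤ N := by omega
  by_contra hlt
  push_neg at hlt
  have hmemi : i ∈ Finset.Icc 1 N := by simp only [Finset.mem_Icc]; omega
  have hmemi1 : i + 1 ∈ Finset.Icc 1 N := by simp only [Finset.mem_Icc]; omega
  obtain ⟨hli, hdi⟩ := hfeas.1 i hmemi
  obtain ⟨hli1, hdi1⟩ := hfeas.1 (i + 1) hmemi1
  set a : ℝ := ℓ i with ha
  set b : ℝ := ℓ (i + 1) with hb
  set m : ℝ := (a + b) / 2 with hm
  have hba : b < a := hlt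
  have hm0 : 0 ≤ m := by positivity
  have hma : m < a := by rw [hm]; linarith
  have hmb : b < m := by rw [hm]; linarith
  clear_value a b m
  -- the modified allocation
  set ℓ' : ℕ → ℝ := fun k => if k = i ∨ k = i + 1 then m else ℓ k with hℓ'
  have hℓ'i : ℓ' i = m := by simp [hℓ']
  have hℓ'i1 : ℓ' (i + 1) = m := by simp [hℓ']
  have hℓ'ne : ∀ k, k ≠ i → k ≠ i + 1 → ℓ' k = ℓ k := by
    intro k h1 h2; simp [hℓ', h1, h2]
  have hne : i ≠ i + 1 := by omega
  -- feasibility of the modified allocation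
  have hfeas' : FeasP11 N A ℓ' d := by
    refine ⟨?_, ?_, ?_⟩
    · intro k hk
      refine ⟨?_, (hfeas.1 k hk).2⟩
      by_cases hc : k = i ∨ k = i + 1
      · have hkm : ℓ' k = m := by simp [hℓ', hc]
        rw [hkm]; exact hm0
      · push_neg at hc
        rw [hℓ'ne k hc.1 hc.2]; exact (hfeas.1 k hk).1
    · intro k hk
      simp only [Finset.mem_Icc] at hk
      rcases lt_trichotomy k i with hki | hki | hki
      · have : ∑ j ∈ Finset.Icc 1 k, (ℓ' j + d j) = ∑ j ∈ Finset.Icc 1 k, (ℓ j + d j) := by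
          refine Finset.sum_congr rfl ?_
          intro j hj
          simp only [Finset.mem_Icc] at hj
          rw [hℓ'ne j (by omega) (by omega)]
        rw [this]
        exact hfeas.2.1 k (by simp only [Finset.mem_Icc]; omega)
      · subst hki
        have heq : ∑ j ∈ Finset.Icc 1 k, (ℓ' j + d j)
            = ∑ j ∈ Finset.Icc 1 k, (ℓ j + d j) + ((ℓ' k + d k) - (ℓ k + d k)) := by
          refine sum_diff_single (by simp only [Finset.mem_Icc]; omega) _ _ ?_
          intro j hj hji
          simp only [Finset.mem_Icc] at hj
          rw [hℓ'ne j hji (by omega)]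
        rw [heq, hℓ'i]
        have hold := hfeas.2.1 k (by simp only [Finset.mem_Icc]; omega)
        have : m + d k - (ℓ k + d k) ≤ 0 := by rw [← ha]; linarith
        linarith
      · have heq : ∑ j ∈ Finset.Icc 1 k, (ℓ' j + d j)
            = ∑ j ∈ Finset.Icc 1 k, (ℓ j + d j)
              + (((ℓ' i + d i) - (ℓ i + d i)) + ((ℓ' (i+1) + d (i+1)) - (ℓ (i+1) + d (i+1)))) := by
          refine sum_diff_pair (i := i) (j := i + 1)
            (by simp only [Finset.mem_Icc]; omega) (by simp only [Finset.mem_Icc]; omega) hne _ _ ?_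
          intro j hj hji hji1
          rw [hℓ'ne j hji hji1]
        rw [heq, hℓ'i, hℓ'i1]
        have hold := hfeas.2.1 k (by simp only [Finset.mem_Icc]; omega)
        have hz : m + d i - (a + d i) + (m + d (i+1) - (b + d (i+1))) = 0 := by
          rw [hm]; ring
        rw [← ha, ← hb]
        linarith
    · have heq : ∑ j ∈ Finset.Icc 1 N, (ℓ' j + d j)
          = ∑ j ∈ Finset.Icc 1 N, (ℓ j + d j)
            + (((ℓ' i + d i) - (ℓ i + d i)) + ((ℓ' (i+1) + d (i+1)) - (ℓ (i+1) + d (i+1)))) := by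
        refine sum_diff_pair hmemi hmemi1 hne _ _ ?_
        intro j hj hji hji1
        rw [hℓ'ne j hji hji1]
      rw [heq, hℓ'i, hℓ'i1, ← ha, ← hb]
      have hz : m + d i - (a + d i) + (m + d (i+1) - (b + d (i+1))) = 0 := by
        rw [hm]; ring
      rw [hfeas.2.2]
      linarith [hfeas.2.2]
  -- properties of h'
  obtain ⟨⟨j1, hj1mem, hj1eq⟩, hubi⟩ := hh' i hmemi
  obtain ⟨⟨j0, hj0mem, hj0eq⟩, hubi1⟩ := hh' (i + 1) hmemi1
  simp only [Finset.mem_Icc] at hj1mem hj0mem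
  have hpi : 0 < h' i := by
    rw [hj1eq]; exact hhpos j1 (by simp only [Finset.mem_Icc]; omega)
  have hpi1 : 0 < h' (i + 1) := by
    rw [hj0eq]; exact hhpos j0 (by simp only [Finset.mem_Icc]; omega)
  have hmono : h' i ≤ h' (i + 1) := by
    rw [hj1eq]; exact hubi1 j1 (by simp only [Finset.mem_Icc]; omega)
  set ai : ℝ := 1 / (η * h' i) with hai
  set ai1 : ℝ := 1 / (η * h' (i + 1)) with hai1
  have hai1pos : 0 < ai1 := by
    rw [hai1]; exact one_div_pos.mpr (mul_pos hη hpi1)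
  have haige : ai1 ≤ ai := by
    rw [hai, hai1]
    apply one_div_le_one_div_of_le
    · positivity
    · exact mul_le_mul_of_nonneg_left hmono hη.le
  clear_value ai ai1
  -- cost comparison
  set Fcost : ℕ → ℝ :=
    fun k => 1 / (η * h' k) * (Eloc ζ C τ (ℓ' k) + Eoff τ σ2 (g k) B (d k)) with hF
  set Gcost : ℕ → ℝ :=
    fun k => 1 / (η * h' k) * (Eloc ζ C τ (ℓ k) + Eoff τ σ2 (g k) B (d k)) with hG
  have hcost : ∑ k ∈ Finset.Icc 1 N, Fcost k
      = ∑ k ∈ Finset.Icc 1 N, Gcost k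
        + ((Fcost i - Gcost i) + (Fcost (i+1) - Gcost (i+1))) := by
    refine sum_diff_pair hmemi hmemi1 hne _ _ ?_
    intro j hj hji hji1
    simp only [hF, hG, hℓ'ne j hji hji1]
  have hEdiff : (Fcost i - Gcost i) + (Fcost (i+1) - Gcost (i+1))
      = ai * (Eloc ζ C τ m - Eloc ζ C τ a) + ai1 * (Eloc ζ C τ m - Eloc ζ C τ b) := by
    simp only [hF, hG, hℓ'i, hℓ'i1, hai, hai1, ← ha, ← hb]
    ring
  -- the key strict inequality
  have hK : (0:ℝ) < ζ * C ^ 3 / τ ^ 2 := by positivity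
  have hcube : 2 * m ^ 3 < a ^ 3 + b ^ 3 := by
    have h1 : 0 < a + b := by linarith
    have h2 : 0 < (a - b) ^ 2 := pow_pos (by linarith) 2
    have key : a ^ 3 + b ^ 3 - 2 * ((a + b) / 2) ^ 3 = 3 / 4 * ((a + b) * (a - b) ^ 2) := by
      ring
    rw [hm]
    linarith [mul_pos h1 h2]
  have hEm_lt_Ea : Eloc ζ C τ m < Eloc ζ C τ a := by
    simp only [Eloc]
    have : m ^ 3 < a ^ 3 := by
      exact pow_lt_pow_left₀ hma hm0 (by norm_num)
    have h3 : ζ * C ^ 3 * m ^ 3 / τ ^ 2 = (ζ * C ^ 3 / τ ^ 2) * m ^ 3 := by ring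
    have h4 : ζ * C ^ 3 * a ^ 3 / τ ^ 2 = (ζ * C ^ 3 / τ ^ 2) * a ^ 3 := by ring
    rw [h3, h4]
    exact mul_lt_mul_of_pos_left this hK
  have hneg : ai * (Eloc ζ C τ m - Eloc ζ C τ a) + ai1 * (Eloc ζ C τ m - Eloc ζ C τ b) < 0 := by
    have hEa0 : Eloc ζ C τ m - Eloc ζ C τ a ≤ 0 := by linarith
    have hstep : ai * (Eloc ζ C τ m - Eloc ζ C τ a) ≤ ai1 * (Eloc ζ C τ m - Eloc ζ C τ a) :=
      mul_le_mul_of_nonpos_right haige hEa0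
    have hSneg : (Eloc ζ C τ m - Eloc ζ C τ a) + (Eloc ζ C τ m - Eloc ζ C τ b) < 0 := by
      simp only [Eloc]
      have h3 : ζ * C ^ 3 * m ^ 3 / τ ^ 2 = (ζ * C ^ 3 / τ ^ 2) * m ^ 3 := by ring
      have h4 : ζ * C ^ 3 * a ^ 3 / τ ^ 2 = (ζ * C ^ 3 / τ ^ 2) * a ^ 3 := by ring
      have h5 : ζ * C ^ 3 * b ^ 3 / τ ^ 2 = (ζ * C ^ 3 / τ ^ 2) * b ^ 3 := by ring
      rw [h3, h4, h5]
      nlinarith [hK, hcube]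
    have hsum : ai1 * ((Eloc ζ C τ m - Eloc ζ C τ a) + (Eloc ζ C τ m - Eloc ζ C τ b)) < 0 :=
      mul_neg_of_pos_of_neg hai1pos hSneg
    have hsplit : ai1 * ((Eloc ζ C τ m - Eloc ζ C τ a) + (Eloc ζ C τ m - Eloc ζ C τ b))
        = ai1 * (Eloc ζ C τ m - Eloc ζ C τ a) + ai1 * (Eloc ζ C τ m - Eloc ζ C τ b) := by ring
    linarith [hsplit ▸ hsum]
  clear_value Fcost Gcost
  have hle := hopt ℓ' d hfeas'
  have hRHS : ∑ i ∈ Finset.Icc 1 N,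
      1 / (η * h' i) * (Eloc ζ C τ (ℓ' i) + Eoff τ σ2 (g i) B (d i))
      = ∑ k ∈ Finset.Icc 1 N, Fcost k := by rw [hF]
  rw [hRHS] at hle
  linarith [hcost, hEdiff, hneg, hle]
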